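/- Let A ∈ ℝ^{N×N} be symmetric and let P ∈ ℝ^{N×N} be an orthogonal projection matrix (P = Pᵀ = P²). Then the powers A^i converge to P as i → ∞ if and only if the following three conditions hold: A P = P, P A = P, and the spectral radius ρ(P − A) < 1. -/

import Mathlib

open Matrix Filter

/-- The spectral radius of a real square matrix: the largest modulus of a (complex)
eigenvalue, obtained by viewing the matrix over `ℂ`. -/
noncomputable def specRad {n : Type*} [Fintype n] [DecidableEq n]
    (X : Matrix n n ℝ) : ENNReal :=
  spectralRadius ℂ (X.map (algebraMap ℝ ℂ))

open scoped Matrix.Norms.L2Operator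

noncomputable instance auxCStarAlg {n : Type*} [Fintype n] [DecidableEq n] :
    CStarAlgebra (Matrix n n ℂ) := {}

/-- A real symmetric matrix is selfadjoint viewed over `ℂ`. -/
lemma aux_selfAdjoint {n : Type*} [Fintype n] [DecidableEq n] {X : Matrix n n ℝ}
    (h : X.IsSymm) : _root_.IsSelfAdjoint (X.map (algebraMap ℝ ℂ)) := by
  rw [_root_.IsSelfAdjoint, Matrix.star_eq_conjTranspose]
  ext a b
  simp only [conjTranspose_apply, Matrix.map_apply]
  rw [← h.apply a b]
  simp

lemma aux_map_pow {n : Type*} [Fintype n] [DecidableEq n] (X : Matrix n n ℝ) (i : ℕ) :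
    (X ^ i).map (algebraMap ℝ ℂ) = (X.map (algebraMap ℝ ℂ)) ^ i := by
  have := map_pow (RingHom.mapMatrix (m := n) (algebraMap ℝ ℂ)) X i
  simpa [RingHom.mapMatrix_apply] using this

lemma aux_pow_mul_proj {n : Type*} [Fintype n] [DecidableEq n] {A P : Matrix n n ℝ}
    (hAP : A * P = P) : ∀ i : ℕ, A ^ i * P = P := by
  intro i
  induction i with
  | zero => simp
  | succ k ih => rw [pow_succ, mul_assoc, hAP, ih]

lemma aux_sub_pow {n : Type*} [Fintype n] [DecidableEq n] {A P : Matrix n n ℝ}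
    (hAP : A * P = P) (hPA : P * A = P) (hPP : P * P = P) :
    ∀ i : ℕ, 1 ≤ i → (A - P) ^ i = A ^ i - P := by
  intro i hi
  induction i with
  | zero => omega
  | succ k ih =>
    rcases Nat.eq_or_lt_of_le hi with h1 | h1
    · simp [← h1]
    · have hk : 1 ≤ k := by omega
      rw [pow_succ, ih hk]
      rw [sub_mul, mul_sub, mul_sub, aux_pow_mul_proj hAP, hPA, hPP, ← pow_succ]
      abel

/-- Let `A ∈ ℝ^{N×N}` be symmetric and `P ∈ ℝ^{N×N}` an orthogonal
projection (`P = Pᵀ = P²`). Then `A^i → P` (entrywise) as `i → ∞` if and only if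
`A P = P`, `P A = P` and `ρ(P − A) < 1`. -/
theorem pow_tendsto_proj_iff
    {N : ℕ} (A P : Matrix (Fin N) (Fin N) ℝ)
    (hA : A.IsSymm) (hPsymm : P.IsSymm) (hPproj : P * P = P) :
    Tendsto (fun i : ℕ => A ^ i) atTop (nhds P) ↔
      (A * P = P ∧ P * A = P ∧ specRad (P - A) < 1) := by
  have hsymm : (P - A).IsSymm := by
    rw [Matrix.IsSymm, transpose_sub, hPsymm, hA]
  have sa : _root_.IsSelfAdjoint ((P - A).map (algebraMap ℝ ℂ)) := aux_selfAdjoint hsymm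
  have hspec : specRad (P - A) = (‖(P - A).map (algebraMap ℝ ℂ)‖₊ : ENNReal) := by
    rw [specRad, sa.spectralRadius_eq_nnnorm]
  constructor
  · intro T
    have hAP : A * P = P := by
      have h1 : Tendsto (fun i : ℕ => A ^ (i + 1)) atTop (nhds P) :=
        T.comp (tendsto_add_atTop_nat 1)
      have h2 : Tendsto (fun i : ℕ => A ^ (i + 1)) atTop (nhds (A * P)) := by
        simpa [pow_succ'] using T.const_mul A
      exact tendsto_nhds_unique h2 h1
    have hPA : P * A = P := by
      have h1 : Tendsto (fun i : ℕ => A ^ (i + 1)) atTop (nhds P) :=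
        T.comp (tendsto_add_atTop_nat 1)
      have h2 : Tendsto (fun i : ℕ => A ^ (i + 1)) atTop (nhds (P * A)) := by
        simpa [pow_succ] using T.mul_const A
      exact tendsto_nhds_unique h2 h1
    refine ⟨hAP, hPA, ?_⟩
    set M := (P - A).map (algebraMap ℝ ℂ) with hM
    -- powers of (P - A) with even exponent tend to 0
    have heven : ∀ i : ℕ, 1 ≤ i → (P - A) ^ (2 * i) = A ^ (2 * i) - P := by
      intro i hi
      have h1 : (P - A) ^ (2 * i) = (A - P) ^ (2 * i) := by
        rw [show P - A = -(A - P) from (neg_sub A P).symm, Even.neg_pow ⟨i, by ring⟩]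
      rw [h1, aux_sub_pow hAP hPA hPproj (2 * i) (by omega)]
    have hrT : Tendsto (fun i : ℕ => (P - A) ^ (2 * i)) atTop (nhds 0) := by
      have hT2 : Tendsto (fun i : ℕ => A ^ (2 * i) - P) atTop (nhds 0) := by
        have := (T.comp (tendsto_atTop_atTop_of_monotone
          (fun a b hab => by simpa using Nat.mul_le_mul_left 2 hab : Monotone fun i : ℕ => 2 * i)
          (fun b => ⟨b, by omega⟩))).sub_const P
        simpa using this
      refine hT2.congr' ?_
      filter_upwards [eventually_ge_atTop 1] with i hi
      exact (heven i hi).symm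
    -- transfer to ℂ and to norms
    have hcT : Tendsto (fun i : ℕ => M ^ (2 * i)) atTop (nhds 0) := by
      refine tendsto_pi_nhds.mpr ?_
      intro a
      refine tendsto_pi_nhds.mpr ?_
      intro b
      have hre : Tendsto (fun i : ℕ => ((P - A) ^ (2 * i)) a b) atTop (nhds 0) := by
        have := (((continuous_apply b).comp (continuous_apply a)).tendsto
          (0 : Matrix (Fin N) (Fin N) ℝ)).comp hrT
        exact this
      have : Tendsto (fun i : ℕ => (((P - A) ^ (2 * i)) a b : ℂ)) atTop (nhds 0) := by
        have := (Complex.continuous_ofReal.tendsto 0).comp hre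
        simpa [Function.comp_def] using this
      refine this.congr fun i => ?_
      rw [hM, ← aux_map_pow]
      simp [Matrix.map_apply]
    have hnormT : Tendsto (fun i : ℕ => ‖M ^ (2 * i)‖) atTop (nhds 0) := by
      have := (continuous_norm.tendsto (0 : Matrix (Fin N) (Fin N) ℂ)).comp hcT
      simpa [Function.comp_def] using this
    have hpow2 : Tendsto (fun k : ℕ => ‖M‖ ^ 2 ^ (k + 1)) atTop (nhds 0) := by
      have hc : Tendsto (fun k : ℕ => ‖M ^ (2 * 2 ^ k)‖) atTop (nhds 0) :=
        hnormT.comp (tendsto_pow_atTop_atTop_of_one_lt one_lt_two)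
      refine hc.congr fun k => ?_
      rw [show 2 * 2 ^ k = 2 ^ (k + 1) by ring]
      rw [← coe_nnnorm, ← coe_nnnorm, sa.nnnorm_pow_two_pow, NNReal.coe_pow]
    have hlt : ‖M‖ < 1 := by
      by_contra hge
      push_neg at hge
      have h1 : (1 : ℝ) ≤ 0 :=
        ge_of_tendsto hpow2 (Eventually.of_forall fun k => one_le_pow₀ hge)
      linarith
    rw [hspec]
    rw [show (1 : ENNReal) = ((1 : NNReal) : ENNReal) by simp, ENNReal.coe_lt_coe]
    rw [← NNReal.coe_lt_coe]
    simpa using hlt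
  · rintro ⟨hAP, hPA, hρ⟩
    have hlt : ‖(P - A).map (algebraMap ℝ ℂ)‖ < 1 := by
      rw [hspec] at hρ
      rw [show (1 : ENNReal) = ((1 : NNReal) : ENNReal) by simp, ENNReal.coe_lt_coe,
        ← NNReal.coe_lt_coe] at hρ
      simpa using hρ
    have hlt' : ‖(A - P).map (algebraMap ℝ ℂ)‖ < 1 := by
      have : (A - P).map (algebraMap ℝ ℂ) = -((P - A).map (algebraMap ℝ ℂ)) := by
        rw [show A - P = -(P - A) from (neg_sub P A).symm]
        ext a b
        simp [Matrix.map_apply]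
      rw [this, norm_neg]
      exact hlt
    have hcpow : Tendsto (fun i : ℕ => ((A - P).map (algebraMap ℝ ℂ)) ^ i) atTop (nhds 0) :=
      tendsto_pow_atTop_nhds_zero_of_norm_lt_one hlt'
    have hrpow : Tendsto (fun i : ℕ => (A - P) ^ i) atTop (nhds 0) := by
      refine tendsto_pi_nhds.mpr ?_
      intro a
      refine tendsto_pi_nhds.mpr ?_
      intro b
      have hent : Tendsto (fun i : ℕ => (((A - P).map (algebraMap ℝ ℂ)) ^ i) a b)
          atTop (nhds 0) := by
        have := (((continuous_apply b).comp (continuous_apply a)).tendsto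
          (0 : Matrix (Fin N) (Fin N) ℂ)).comp hcpow
        exact this
      have hre : Tendsto (fun i : ℕ => ((((A - P).map (algebraMap ℝ ℂ)) ^ i) a b).re)
          atTop (nhds 0) := by
        have := (Complex.continuous_re.tendsto 0).comp hent
        simpa [Function.comp_def] using this
      refine hre.congr fun i => ?_
      rw [← aux_map_pow]
      simp [Matrix.map_apply]
    have hfin : Tendsto (fun i : ℕ => P + (A - P) ^ i) atTop (nhds P) := by
      have := Tendsto.add
        (tendsto_const_nhds : Tendsto (fun _ : ℕ => P) atTop (nhds P)) hrpow
      simpa using this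
    refine hfin.congr' ?_
    filter_upwards [eventually_ge_atTop 1] with i hi
    rw [aux_sub_pow hAP hPA hPproj i hi]
    abel
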